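/- Consider the bivariate Elastic net with M = [[1,ρ],[ρ,1]], h₁ > |h₂| ≥ 0, ρ ∈ [0,1), μ ≥ 0, η = ρ/(1+μ). If h₂ ≥ η·h₁ and √q < (h₂ − η·h₁)/(1−η), then both coordinates of the minimizer are nonzero: b̂₁ = [(h₁−√q)/(1+μ) − η·(h₂−√q)/(1+μ)]/(1−η²) and b̂₂ = [(h₂−√q)/(1+μ) − η·(h₁−√q)/(1+μ)]/(1−η²), with b̂₁ > 0 and b̂₂ > 0. -/

import Mathlib

/-- Bivariate Elastic-net objective. -/
noncomputable def enObj (ρ μ q h1 h2 b1 b2 : ℝ) : ℝ :=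
  (1 / 2) * (b1 ^ 2 + 2 * ρ * b1 * b2 + b2 ^ 2) - (b1 * h1 + b2 * h2)
    + Real.sqrt q * (|b1| + |b2|) + (μ / 2) * (b1 ^ 2 + b2 ^ 2)

set_option maxHeartbeats 1000000 in
/-- Final segment of the Elastic-net solution path: with `η = ρ/(1+μ)`, if
`h₂ ≥ η h₁` and `√q < (h₂−ηh₁)/(1−η)`, both coordinates of the minimizer are
positive and are given by the explicit formulas. -/
theorem stmt_7 (ρ μ q h1 h2 : ℝ) (hρ : ρ ∈ Set.Ico (0 : ℝ) 1) (hμ : 0 ≤ μ)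
    (hh : |h2| < h1)
    (hη : h2 ≥ (ρ / (1 + μ)) * h1)
    (hq : Real.sqrt q < (h2 - (ρ / (1 + μ)) * h1) / (1 - ρ / (1 + μ))) :
    let η := ρ / (1 + μ)
    let b1 := ((h1 - Real.sqrt q) / (1 + μ) - η * ((h2 - Real.sqrt q) / (1 + μ))) / (1 - η ^ 2)
    let b2 := ((h2 - Real.sqrt q) / (1 + μ) - η * ((h1 - Real.sqrt q) / (1 + μ))) / (1 - η ^ 2)
    0 < b1 ∧ 0 < b2 ∧
    ∀ c1 c2 : ℝ, enObj ρ μ q h1 h2 b1 b2 ≤ enObj ρ μ q h1 h2 c1 c2 := by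
  obtain ⟨hρ0, hρ1⟩ := hρ
  intro η b1 b2
  set s := Real.sqrt q with hs
  have hs0 : 0 ≤ s := Real.sqrt_nonneg q
  have hμ1 : (0:ℝ) < 1 + μ := by linarith
  have hη0 : 0 ≤ η := div_nonneg hρ0 hμ1.le
  have hη1 : η < 1 := by
    rw [div_lt_one hμ1]; linarith
  have hηsq : (0:ℝ) < 1 - η ^ 2 := by nlinarith
  have h2a : h2 < h1 := lt_of_le_of_lt (le_abs_self h2) hh
  have hh1 : 0 < h1 := lt_of_le_of_lt (abs_nonneg h2) hh
  -- key inequality from hq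
  have hq' : s * (1 - η) < h2 - η * h1 := by
    have := (lt_div_iff₀ (by linarith : (0:ℝ) < 1 - η)).mp hq
    linarith
  -- positivity of b2
  have hb2num : 0 < (h2 - s) / (1 + μ) - η * ((h1 - s) / (1 + μ)) := by
    have heq : (h2 - s) / (1 + μ) - η * ((h1 - s) / (1 + μ))
        = ((h2 - s) - η * (h1 - s)) / (1 + μ) := by ring
    rw [heq]
    exact div_pos (by nlinarith) hμ1
  have hb2 : 0 < b2 := div_pos hb2num hηsq
  have hb1num : 0 < (h1 - s) / (1 + μ) - η * ((h2 - s) / (1 + μ)) := by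
    have heq : (h1 - s) / (1 + μ) - η * ((h2 - s) / (1 + μ))
        = ((h1 - s) - η * (h2 - s)) / (1 + μ) := by ring
    rw [heq]
    exact div_pos (by nlinarith) hμ1
  have hb1 : 0 < b1 := div_pos hb1num hηsq
  refine ⟨hb1, hb2, ?_⟩
  -- stationarity equations
  have hμ1' : (1 + μ) ≠ 0 := ne_of_gt hμ1
  have hηsq' : (1 - η ^ 2) ≠ 0 := ne_of_gt hηsq
  have hηdef : η * (1 + μ) = ρ := by show ρ / (1 + μ) * (1 + μ) = ρ; field_simp
  have e1 : (1 + μ) * b1 + ρ * b2 = h1 - s := by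
    rw [← hηdef]
    show (1 + μ) * (((h1 - s) / (1 + μ) - η * ((h2 - s) / (1 + μ))) / (1 - η ^ 2))
      + η * (1 + μ) * (((h2 - s) / (1 + μ) - η * ((h1 - s) / (1 + μ))) / (1 - η ^ 2)) = h1 - s
    field_simp
    ring
  have e2 : ρ * b1 + (1 + μ) * b2 = h2 - s := by
    rw [← hηdef]
    show η * (1 + μ) * (((h1 - s) / (1 + μ) - η * ((h2 - s) / (1 + μ))) / (1 - η ^ 2))
      + (1 + μ) * (((h2 - s) / (1 + μ) - η * ((h1 - s) / (1 + μ))) / (1 - η ^ 2)) = h2 - s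
    field_simp
    ring
  clear_value η b1 b2
  intro c1 c2
  unfold enObj
  rw [← hs, abs_of_pos hb1, abs_of_pos hb2]
  have hc1 : c1 ≤ |c1| := le_abs_self c1
  have hc2 : c2 ≤ |c2| := le_abs_self c2
  have key : ((1 / 2) * (c1 ^ 2 + 2 * ρ * c1 * c2 + c2 ^ 2) - (c1 * h1 + c2 * h2)
        + s * (|c1| + |c2|) + (μ / 2) * (c1 ^ 2 + c2 ^ 2))
      - ((1 / 2) * (b1 ^ 2 + 2 * ρ * b1 * b2 + b2 ^ 2) - (b1 * h1 + b2 * h2)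
        + s * (b1 + b2) + (μ / 2) * (b1 ^ 2 + b2 ^ 2))
      = (1 / 2) * ((c1 - b1) ^ 2 + 2 * ρ * (c1 - b1) * (c2 - b2) + (c2 - b2) ^ 2)
        + (μ / 2) * ((c1 - b1) ^ 2 + (c2 - b2) ^ 2)
        + s * (|c1| - c1) + s * (|c2| - c2) := by
    linear_combination (c1 - b1) * e1 + (c2 - b2) * e2
  have quad : 0 ≤ (1 / 2) * ((c1 - b1) ^ 2 + 2 * ρ * (c1 - b1) * (c2 - b2) + (c2 - b2) ^ 2) := by
    nlinarith [mul_nonneg hρ0 (sq_nonneg (c1 - b1 + (c2 - b2))), sq_nonneg (c1 - b1),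
      sq_nonneg (c2 - b2)]
  have hm : 0 ≤ (μ / 2) * ((c1 - b1) ^ 2 + (c2 - b2) ^ 2) := by positivity
  have h1' : 0 ≤ s * (|c1| - c1) := mul_nonneg hs0 (by linarith)
  have h2' : 0 ≤ s * (|c2| - c2) := mul_nonneg hs0 (by linarith)
  linarith [key, quad, hm, h1', h2']
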